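/- The assumption b > ω₁ holds if and only if S_ω × S_{ω₁} is a k_R-space, if and only if S_ω × S_{ω₁} is a k-space. -/

import Mathlib

open Set Filter Topology Cardinal

/-- A `k`-space: a set is closed whenever its trace on every compact subset is closed. -/
def IsKSpace (X : Type*) [TopologicalSpace X] : Prop :=
  ∀ C : Set X, (∀ K : Set X, IsCompact K → IsClosed (Subtype.val ⁻¹' C : Set K)) → IsClosed C

/-- A `k_R`-space: every real-valued function which is continuous on each
compact subset is continuous. -/
def IsKRSpace (X : Type*) [TopologicalSpace X] : Prop :=
  ∀ f : X → ℝ, (∀ K : Set X, IsCompact K → ContinuousOn f K) → Continuous f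
/-- The sequential fan with spokes indexed by `κ`: underlying set is
`Option (κ × ℕ)`, with `none` the apex and `some (α, n)` the `n`-th point
of the `α`-th spoke. -/
def Fan (κ : Type*) : Type _ := Option (κ × ℕ)

/-- The quotient topology on the fan: each point `some (α, n)` is isolated and
a set containing the apex is open iff it contains a tail of every spoke. -/
instance Fan.instTopologicalSpace (κ : Type*) : TopologicalSpace (Fan κ) where
  IsOpen s := (none : Option (κ × ℕ)) ∈ s → ∀ α : κ, {n : ℕ | (some (α, n) : Option (κ × ℕ)) ∉ s}.Finite
  isOpen_univ := by intro _ α; exact Set.finite_empty.subset (fun n hn => (hn (Set.mem_univ _)).elim)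
  isOpen_inter := by
    intro s t hs ht hmem α
    refine ((hs hmem.1 α).union (ht hmem.2 α)).subset ?_
    intro n hn
    by_contra h
    simp only [Set.mem_union, Set.mem_setOf_eq] at h
    push_neg at h
    exact hn ⟨h.1, h.2⟩
  isOpen_sUnion := by
    intro S hS hmem α
    obtain ⟨s, hsS, hs⟩ := hmem
    refine (hS s hsS hs α).subset ?_
    intro n hn hns
    exact hn (Set.mem_sUnion.2 ⟨s, hsS, hns⟩)

/-- The apex of the sequential fan. -/
def Fan.apex {κ : Type*} : Fan κ := (none : Option (κ × ℕ))

/-- The `n`-th point of the `α`-th spoke of the sequential fan. -/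
def Fan.pt {κ : Type*} (α : κ) (n : ℕ) : Fan κ := (some (α, n) : Option (κ × ℕ))
/-- The bounding number `𝔟`: the least cardinality of a family in `ℕ → ℕ` which is
unbounded with respect to eventual domination. -/
noncomputable def boundingNumber : Cardinal :=
  sInf {c : Cardinal | ∃ F : Set (ℕ → ℕ), #↥F = c ∧
    ¬ ∃ g : ℕ → ℕ, ∀ f ∈ F, ∀ᶠ n in Filter.atTop, f n ≤ g n}


namespace FanAux
variable {κ : Type*}

lemma isOpen_iff {s : Set (Fan κ)} :
    IsOpen s ↔ ((Fan.apex : Fan κ) ∈ s → ∀ α, {n | Fan.pt α n ∉ s}.Finite) := Iff.rfl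

lemma pt_injective (α : κ) : Function.Injective (Fan.pt (κ := κ) α) := by
  intro a b h
  have : ((α,a) : κ × ℕ) = (α,b) := Option.some.inj h
  exact (Prod.ext_iff.1 this).2

lemma pt_ne_apex (α : κ) (n : ℕ) : Fan.pt α n ≠ (Fan.apex : Fan κ) := by
  exact Option.some_ne_none _

lemma isOpen_of_not_apex {s : Set (Fan κ)} (h : (Fan.apex : Fan κ) ∉ s) : IsOpen s :=
  isOpen_iff.2 fun ha => absurd ha h

lemma isOpen_singleton_pt (α : κ) (n : ℕ) : IsOpen ({Fan.pt α n} : Set (Fan κ)) :=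
  isOpen_of_not_apex (fun h => Option.some_ne_none _ (Set.mem_singleton_iff.1 h).symm)

instance : T1Space (Fan κ) := by
  constructor
  intro x
  rw [← isOpen_compl_iff]
  match x with
  | none => exact isOpen_of_not_apex (fun h => h rfl)
  | some p =>
    refine isOpen_iff.2 fun _ α => ?_
    refine (Set.finite_singleton p.2).subset ?_
    intro n hn
    simp only [Set.mem_setOf_eq, Set.mem_compl_iff, not_not, Set.mem_singleton_iff, Fan.pt] at hn
    have : (α, n) = p := Option.some.inj (Classical.byContradiction fun h' => hn h')
    simp [← this]

lemma tendsto_pt_apex (α : κ) : Tendsto (Fan.pt (κ := κ) α) atTop (𝓝 Fan.apex) := by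
  intro U hU
  rcases mem_nhds_iff.1 hU with ⟨o, hoU, ho, hao⟩
  have hfin : {n | Fan.pt α n ∉ o}.Finite := (isOpen_iff.1 ho) hao α
  have : ∀ᶠ n in cofinite, Fan.pt α n ∈ o := by
    rw [Filter.eventually_cofinite]
    exact hfin
  rw [Nat.cofinite_eq_atTop] at this
  exact Filter.mem_of_superset (this.mono fun n hn => hoU hn) (by intro; exact id)

/-- the spoke with its apex -/
def cseq (α : κ) : Set (Fan κ) := insert Fan.apex (Set.range (Fan.pt α))

lemma isCompact_cseq (α : κ) : IsCompact (cseq α) :=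
  (tendsto_pt_apex α).isCompact_insert_range

lemma apex_mem_cseq (α : κ) : (Fan.apex : Fan κ) ∈ cseq α := Set.mem_insert _ _
lemma pt_mem_cseq (α : κ) (n : ℕ) : Fan.pt α n ∈ cseq α := Set.mem_insert_of_mem _ ⟨n, rfl⟩

/-- trace-closedness transfer -/
lemma mem_of_traceClosed {X : Type*} [TopologicalSpace X] {C K : Set X}
    (hK : IsClosed (Subtype.val ⁻¹' C : Set K)) {x : X} (hxK : x ∈ K)
    (hx : x ∈ closure (C ∩ K)) : x ∈ C := by
  rcases isClosed_induced_iff.1 hK with ⟨F, hF, hFC⟩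
  have hCK : C ∩ K = F ∩ K := by
    ext y
    constructor
    · rintro ⟨hyC, hyK⟩
      have : (⟨y, hyK⟩ : K) ∈ (Subtype.val ⁻¹' C : Set K) := hyC
      rw [← hFC] at this
      exact ⟨this, hyK⟩
    · rintro ⟨hyF, hyK⟩
      have : (⟨y, hyK⟩ : K) ∈ (Subtype.val ⁻¹' F : Set K) := hyF
      rw [hFC] at this
      exact ⟨this, hyK⟩
  have : x ∈ F := hF.closure_subset (closure_mono (by rw [hCK]; exact Set.inter_subset_left) hx)
  have := hCK.symm ▸ (Set.mem_inter this hxK)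
  exact this.1

lemma mem_closure_prod {κ₁ κ₂ : Type*} {x₁ : Fan κ₁} {x₂ : Fan κ₂} {s : Set (Fan κ₁ × Fan κ₂)}
    (h : ∀ u v, IsOpen u → IsOpen v → x₁ ∈ u → x₂ ∈ v → ∃ p ∈ s, p.1 ∈ u ∧ p.2 ∈ v) :
    (x₁, x₂) ∈ closure s := by
  rw [mem_closure_iff]
  intro o ho hxo
  rcases isOpen_prod_iff.1 ho x₁ x₂ hxo with ⟨u, v, hu, hv, hx1, hx2, huv⟩
  rcases h u v hu hv hx1 hx2 with ⟨p, hps, hp1, hp2⟩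
  exact ⟨p, huv (Set.mk_mem_prod hp1 hp2), hps⟩

end FanAux


namespace FanAux
variable {κ : Type*}

/-- basic open neighbourhood of the apex -/
def U (g : κ → ℕ) : Set (Fan κ) := {x : Fan κ | ∀ β k, x = Fan.pt β k → g β ≤ k}

lemma apex_mem_U (g : κ → ℕ) : (Fan.apex : Fan κ) ∈ U g := by
  intro β k h
  exact absurd h.symm (pt_ne_apex β k)

lemma pt_mem_U_iff {g : κ → ℕ} {β : κ} {k : ℕ} : Fan.pt β k ∈ U g ↔ g β ≤ k := by
  constructor
  · intro h; exact h β k rfl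
  · intro h β' k' he
    have : ((β, k) : κ × ℕ) = (β', k') := Option.some.inj he
    obtain ⟨h1, h2⟩ := Prod.ext_iff.1 this
    subst h1; subst h2; exact h

lemma some_mem_U_iff {g : κ → ℕ} {p : κ × ℕ} : (some p : Fan κ) ∈ U g ↔ g p.1 ≤ p.2 :=
  pt_mem_U_iff (β := p.1) (k := p.2)

lemma isOpen_U (g : κ → ℕ) : IsOpen (U g) := by
  refine isOpen_iff.2 fun _ β => ?_
  refine (Set.finite_Iio (g β)).subset ?_
  intro n hn
  simp only [Set.mem_setOf_eq] at hn
  by_contra h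
  exact hn (pt_mem_U_iff.2 (not_lt.1 (by simpa using h)))

/-- bound from a finite set of naturals -/
lemma bound_of_finite {s : Set ℕ} (h : s.Finite) : ∃ N : ℕ, ∀ m, N ≤ m → m ∉ s := by
  refine ⟨h.toFinset.sup id + 1, fun m hm hms => ?_⟩
  have : m ≤ h.toFinset.sup id := Finset.le_sup (f := id) (h.mem_toFinset.2 hms)
  omega

variable {κ₁ κ₂ : Type*}

/-- extraction along the first coordinate -/
lemma extractA {C : Set (Fan κ₁ × Fan κ₂)}
    (HC : ∀ K : Set (Fan κ₁ × Fan κ₂), IsCompact K → IsClosed (Subtype.val ⁻¹' C : Set K))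
    {n : κ₁} {α : κ₂} {x₂ : Fan κ₂} (hx₂ : x₂ ∈ cseq α)
    (hinf : {k | (Fan.pt n k, x₂) ∈ C}.Infinite) : (Fan.apex, x₂) ∈ C := by
  have hK : IsCompact (cseq n ×ˢ cseq α) := (isCompact_cseq n).prod (isCompact_cseq α)
  refine mem_of_traceClosed (HC _ hK) (Set.mk_mem_prod (apex_mem_cseq n) hx₂) ?_
  refine mem_closure_prod fun u v hu hv hau hx2v => ?_
  have hfin : {k | Fan.pt n k ∉ u}.Finite := (isOpen_iff.1 hu) hau n
  obtain ⟨k, hkC, hku⟩ := (hinf.diff hfin).nonempty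
  refine ⟨(Fan.pt n k, x₂), ⟨hkC, Set.mk_mem_prod (pt_mem_cseq n k) hx₂⟩, ?_, hx2v⟩
  simpa using hku

/-- extraction along the second coordinate -/
lemma extractB {C : Set (Fan κ₁ × Fan κ₂)}
    (HC : ∀ K : Set (Fan κ₁ × Fan κ₂), IsCompact K → IsClosed (Subtype.val ⁻¹' C : Set K))
    {n : κ₁} {α : κ₂} {x₁ : Fan κ₁} (hx₁ : x₁ ∈ cseq n)
    (hinf : {m | (x₁, Fan.pt α m) ∈ C}.Infinite) : (x₁, Fan.apex) ∈ C := by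
  have hK : IsCompact (cseq n ×ˢ cseq α) := (isCompact_cseq n).prod (isCompact_cseq α)
  refine mem_of_traceClosed (HC _ hK) (Set.mk_mem_prod hx₁ (apex_mem_cseq α)) ?_
  refine mem_closure_prod fun u v hu hv hx1u hav => ?_
  have hfin : {m | Fan.pt α m ∉ v}.Finite := (isOpen_iff.1 hv) hav α
  obtain ⟨m, hmC, hmv⟩ := (hinf.diff hfin).nonempty
  refine ⟨(x₁, Fan.pt α m), ⟨hmC, Set.mk_mem_prod hx₁ (pt_mem_cseq α m)⟩, hx1u, ?_⟩
  simpa using hmv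

/-- extraction to the double apex -/
lemma extractC {C : Set (Fan κ₁ × Fan κ₂)}
    (HC : ∀ K : Set (Fan κ₁ × Fan κ₂), IsCompact K → IsClosed (Subtype.val ⁻¹' C : Set K))
    {n : κ₁} {α : κ₂} {S : Set (ℕ × ℕ)}
    (hS : ∀ km ∈ S, (Fan.pt n km.1, Fan.pt α km.2) ∈ C)
    (h : ∀ G H : Set ℕ, G.Finite → H.Finite → ∃ km ∈ S, km.1 ∉ G ∧ km.2 ∉ H) :
    ((Fan.apex : Fan κ₁), (Fan.apex : Fan κ₂)) ∈ C := by
  have hK : IsCompact (cseq n ×ˢ cseq α) := (isCompact_cseq n).prod (isCompact_cseq α)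
  refine mem_of_traceClosed (HC _ hK) (Set.mk_mem_prod (apex_mem_cseq n) (apex_mem_cseq α)) ?_
  refine mem_closure_prod fun u v hu hv hau hav => ?_
  have hfu : {k | Fan.pt n k ∉ u}.Finite := (isOpen_iff.1 hu) hau n
  have hfv : {m | Fan.pt α m ∉ v}.Finite := (isOpen_iff.1 hv) hav α
  obtain ⟨km, hkmS, hk, hm⟩ := h _ _ hfu hfv
  refine ⟨(Fan.pt n km.1, Fan.pt α km.2),
    ⟨hS km hkmS, Set.mk_mem_prod (pt_mem_cseq _ _) (pt_mem_cseq _ _)⟩, ?_, ?_⟩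
  · simpa using hk
  · simpa using hm

/-- structure of compact subsets of the fan -/
lemma compact_spokes {K : Set (Fan κ)} (hK : IsCompact K) :
    ∃ A : Finset κ, {p : κ × ℕ | Fan.pt p.1 p.2 ∈ K ∧ p.1 ∉ A}.Finite := by
  classical
  by_contra hcon
  push_neg at hcon
  have hcon' : ∀ A : Finset κ, ∃ p : κ × ℕ, Fan.pt p.1 p.2 ∈ K ∧ p.1 ∉ A := by
    intro A
    have : {p : κ × ℕ | Fan.pt p.1 p.2 ∈ K ∧ p.1 ∉ A}.Infinite := hcon A
    exact this.nonempty
  choose p hpK hpA using hcon'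
  -- build a sequence with pairwise distinct spokes
  let A : ℕ → Finset κ := fun i => Nat.rec (∅ : Finset κ) (fun _ Aj => insert (p Aj).1 Aj) i
  have hAsucc : ∀ j, A (j+1) = insert (p (A j)).1 (A j) := fun j => rfl
  have hAmono : ∀ i j, i ≤ j → A i ⊆ A j := by
    intro i j hij
    induction j with
    | zero => simp_all
    | succ j ih =>
      rcases Nat.lt_or_ge i (j+1) with h | h
      · refine (ih (Nat.lt_succ_iff.1 h)).trans ?_
        rw [hAsucc j]
        exact Finset.subset_insert _ _
      · have : i = j + 1 := le_antisymm hij h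
        subst this; exact subset_rfl
  let c : ℕ → κ × ℕ := fun i => p (A i)
  have hcK : ∀ i, Fan.pt (c i).1 (c i).2 ∈ K := fun i => hpK (A i)
  have hcmem : ∀ i, (c i).1 ∈ A (i+1) := by
    intro i
    rw [hAsucc i]
    exact Finset.mem_insert_self _ _
  have hcnot : ∀ i, (c i).1 ∉ A i := fun i => hpA (A i)
  have hinj1 : ∀ i j, i < j → (c i).1 ≠ (c j).1 := by
    intro i j hij he
    exact hcnot j (he ▸ hAmono (i+1) j hij (hcmem i))
  have hspokeinj : Function.Injective fun i => (c i).1 := by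
    intro i j he
    by_contra hne
    rcases Nat.lt_or_ge i j with h | h
    · exact hinj1 i j h he
    · exact hinj1 j i (lt_of_le_of_ne h (Ne.symm hne)) he.symm
  set T : Set (Fan κ) := Set.range (fun i => Fan.pt (c i).1 (c i).2) with hT
  have hTK : T ⊆ K := by rintro x ⟨i, rfl⟩; exact hcK i
  have hTclosed : IsClosed T := by
    rw [← isOpen_compl_iff]
    refine isOpen_iff.2 fun _ β => ?_
    have hsub : Set.Subsingleton {m | Fan.pt β m ∉ Tᶜ} := by
      intro m1 hm1 m2 hm2
      simp only [Set.mem_setOf_eq, Set.mem_compl_iff, not_not, hT, Set.mem_range] at hm1 hm2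
      obtain ⟨i, hi⟩ := hm1
      obtain ⟨j, hj⟩ := hm2
      have hi' : ((c i).1, (c i).2) = (β, m1) := Option.some.inj hi
      have hj' : ((c j).1, (c j).2) = (β, m2) := Option.some.inj hj
      have hij : i = j := hspokeinj (by
        show (c i).1 = (c j).1
        rw [(Prod.ext_iff.1 hi').1, (Prod.ext_iff.1 hj').1])
      have e1 : (c i).2 = m1 := (Prod.ext_iff.1 hi').2
      have e2 : (c j).2 = m2 := (Prod.ext_iff.1 hj').2
      rw [← e1, ← e2, hij]
    exact hsub.finite
  have hTcompact : IsCompact T := hK.of_isClosed_subset hTclosed hTK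
  have hTne : ∀ x ∈ T, IsOpen ({x} : Set (Fan κ)) := by
    rintro x ⟨i, rfl⟩
    exact isOpen_singleton_pt _ _
  have hdisc : DiscreteTopology ↥T := by
    rw [discreteTopology_iff_isOpen_singleton]
    intro a
    have : ({a} : Set ↥T) = Subtype.val ⁻¹' {a.val} := by
      ext z; simp [Subtype.val_inj]
    rw [this]
    exact (hTne a.val a.property).preimage continuous_subtype_val
  have hTfin : T.Finite := hTcompact.finite (isDiscrete_iff_discreteTopology.2 hdisc)
  have : T.Infinite := by
    apply Set.infinite_range_of_injective
    intro i j he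
    have : ((c i).1, (c i).2) = ((c j).1, (c j).2) := Option.some.inj he
    exact hspokeinj (Prod.ext_iff.1 this).1
  exact this hTfin

end FanAux

namespace FanAux

lemma kspace_of_bounded {ι : Type} [Nonempty ι]
    (Hb : ∀ gs : ι → ℕ → ℕ, ∃ g : ℕ → ℕ, ∀ α : ι, ∀ᶠ n in Filter.atTop, gs α n ≤ g n) :
    IsKSpace (Fan ℕ × Fan ι) := by
  intro C HC
  rw [← isOpen_compl_iff, isOpen_prod_iff]
  intro a b hab
  match a, b with
  | some p, some q =>
    refine ⟨{some p}, {some q}, isOpen_singleton_pt p.1 p.2, isOpen_singleton_pt q.1 q.2,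
      rfl, rfl, ?_⟩
    rintro ⟨x, y⟩ ⟨hx, hy⟩
    simp only [Set.mem_singleton_iff] at hx hy
    subst hx; subst hy; exact hab
  | some p, none =>
    have hfin : ∀ α : ι, {m | ((some p : Fan ℕ), Fan.pt α m) ∈ C}.Finite := by
      intro α
      by_contra hcontra
      exact hab (extractB HC (pt_mem_cseq p.1 p.2) hcontra)
    choose h hh using fun α => bound_of_finite (hfin α)
    refine ⟨{some p}, U h, isOpen_singleton_pt p.1 p.2, isOpen_U h, rfl, apex_mem_U h, ?_⟩
    rintro ⟨x, y⟩ ⟨hx, hy⟩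
    simp only [Set.mem_singleton_iff] at hx
    subst hx
    match y, hy with
    | none, _ => exact hab
    | some q, hy => exact hh q.1 q.2 (some_mem_U_iff.1 hy)
  | none, some q =>
    have hfin : ∀ n : ℕ, {k | (Fan.pt n k, (some q : Fan ι)) ∈ C}.Finite := by
      intro n
      by_contra hcontra
      exact hab (extractA HC (pt_mem_cseq q.1 q.2) hcontra)
    choose g hg using fun n => bound_of_finite (hfin n)
    refine ⟨U g, {some q}, isOpen_U g, isOpen_singleton_pt q.1 q.2, apex_mem_U g, rfl, ?_⟩
    rintro ⟨x, y⟩ ⟨hx, hy⟩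
    simp only [Set.mem_singleton_iff] at hy
    subst hy
    match x, hx with
    | none, _ => exact hab
    | some p, hx => exact hg p.1 p.2 (some_mem_U_iff.1 hx)
  | none, none =>
    have α₀ : ι := Classical.arbitrary ι
    -- Step 1
    have hfin1 : ∀ n : ℕ, {k | (Fan.pt n k, (Fan.apex : Fan ι)) ∈ C}.Finite := by
      intro n
      by_contra hcontra
      exact hab (extractA HC (apex_mem_cseq α₀) hcontra)
    choose g₀ hg₀ using fun n => bound_of_finite (hfin1 n)
    -- Step 2
    have hfin2 : ∀ α : ι, {m | ((Fan.apex : Fan ℕ), Fan.pt α m) ∈ C}.Finite := by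
      intro α
      by_contra hcontra
      exact hab (extractB HC (apex_mem_cseq 0) hcontra)
    choose m₀ hm₀ using fun α => bound_of_finite (hfin2 α)
    -- Step 3
    have hrow : ∀ (n : ℕ) (α : ι) (m : ℕ), m₀ α ≤ m →
        {k | (Fan.pt n k, Fan.pt α m) ∈ C}.Finite := by
      intro n α m hm
      by_contra hcontra
      exact hm₀ α m hm (extractA HC (pt_mem_cseq α m) hcontra)
    have hcol : ∀ (n : ℕ) (α : ι) (k : ℕ), g₀ n ≤ k →
        {m | (Fan.pt n k, Fan.pt α m) ∈ C}.Finite := by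
      intro n α k hk
      by_contra hcontra
      exact hg₀ n k hk (extractB HC (pt_mem_cseq n k) hcontra)
    -- Step 4
    have hS : ∀ (n : ℕ) (α : ι),
        {km : ℕ × ℕ | g₀ n ≤ km.1 ∧ m₀ α ≤ km.2 ∧ (Fan.pt n km.1, Fan.pt α km.2) ∈ C}.Finite := by
      intro n α
      by_contra hinf
      set S := {km : ℕ × ℕ | g₀ n ≤ km.1 ∧ m₀ α ≤ km.2 ∧ (Fan.pt n km.1, Fan.pt α km.2) ∈ C}
        with hSdef
      apply hab
      refine extractC HC (n := n) (α := α) (S := S) (fun km hkm => hkm.2.2) ?_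
      intro G H hG hH
      have hbadG : ∀ k, {km ∈ S | km.1 = k}.Finite := by
        intro k
        rcases Nat.lt_or_ge k (g₀ n) with hlt | hge
        · refine Set.Finite.subset (Set.finite_empty) ?_
          rintro ⟨k', m'⟩ ⟨hmem, hk'⟩
          exact absurd hmem.1 (by simp only at hk'; omega)
        · refine Set.Finite.subset ((hcol n α k hge).image fun m => (k, m)) ?_
          rintro ⟨k', m'⟩ ⟨hmem, hk'⟩
          simp only at hk'
          subst hk'
          exact ⟨m', hmem.2.2, rfl⟩
      have hbadH : ∀ m, {km ∈ S | km.2 = m}.Finite := by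
        intro m
        rcases Nat.lt_or_ge m (m₀ α) with hlt | hge
        · refine Set.Finite.subset (Set.finite_empty) ?_
          rintro ⟨k', m'⟩ ⟨hmem, hm'⟩
          exact absurd hmem.2.1 (by simp only at hm'; omega)
        · refine Set.Finite.subset ((hrow n α m hge).image fun k => (k, m)) ?_
          rintro ⟨k', m'⟩ ⟨hmem, hm'⟩
          simp only at hm'
          subst hm'
          exact ⟨k', hmem.2.2, rfl⟩
      have hbad : {km ∈ S | km.1 ∈ G ∨ km.2 ∈ H}.Finite := by
        refine Set.Finite.subset ((hG.biUnion fun k _ => hbadG k).union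
          (hH.biUnion fun m _ => hbadH m)) ?_
        rintro km ⟨hkmS, hor⟩
        rcases hor with h1 | h2
        · exact Or.inl (Set.mem_biUnion h1 ⟨hkmS, rfl⟩)
        · exact Or.inr (Set.mem_biUnion h2 ⟨hkmS, rfl⟩)
      obtain ⟨km, hkmS, hkmbad⟩ := (Set.Infinite.diff hinf hbad).nonempty
      refine ⟨km, hkmS, ?_, ?_⟩
      · intro hkG; exact hkmbad ⟨hkmS, Or.inl hkG⟩
      · intro hmH; exact hkmbad ⟨hkmS, Or.inr hmH⟩
    -- Step 5
    have hKM : ∀ (n : ℕ) (α : ι), ∃ KK MM : ℕ,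
        (∀ k m, KK ≤ k → m₀ α ≤ m → (Fan.pt n k, Fan.pt α m) ∉ C) ∧
        (∀ k m, g₀ n ≤ k → m₀ α ≤ m → MM ≤ m → (Fan.pt n k, Fan.pt α m) ∉ C) := by
      intro n α
      obtain ⟨K1, hK1⟩ := bound_of_finite ((hS n α).image Prod.fst)
      obtain ⟨M1, hM1⟩ := bound_of_finite ((hS n α).image Prod.snd)
      refine ⟨max K1 (g₀ n), M1, ?_, ?_⟩
      · intro k m hk hm hCm
        exact hK1 k (le_trans (le_max_left _ _) hk)
          ⟨(k, m), ⟨le_trans (le_max_right _ _) hk, hm, hCm⟩, rfl⟩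
      · intro k m hk hm hM hCm
        exact hM1 m hM ⟨(k, m), ⟨hk, hm, hCm⟩, rfl⟩
    choose KK MM hKK hMM using hKM
    -- Step 6: boundedness
    obtain ⟨gstar, hgstar⟩ := Hb fun α n => KK n α
    have hN : ∀ α : ι, ∃ N : ℕ, ∀ n, N ≤ n → KK n α ≤ gstar n := by
      intro α
      obtain ⟨N, hN⟩ := Filter.eventually_atTop.1 (hgstar α)
      exact ⟨N, hN⟩
    choose N hN' using hN
    refine ⟨U (fun n => max (gstar n) (g₀ n)),
      U (fun α => max (m₀ α) ((Finset.range (N α)).sup fun n => MM n α)),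
      isOpen_U _, isOpen_U _, apex_mem_U _, apex_mem_U _, ?_⟩
    rintro ⟨x, y⟩ ⟨hx, hy⟩
    match x, y, hx, hy with
    | none, none, _, _ => exact hab
    | some p, none, hx, _ =>
      have hk : max (gstar p.1) (g₀ p.1) ≤ p.2 := some_mem_U_iff.1 hx
      exact hg₀ p.1 p.2 (le_trans (le_max_right _ _) hk)
    | none, some q, _, hy =>
      have hm : max (m₀ q.1) ((Finset.range (N q.1)).sup fun n => MM n q.1) ≤ q.2 :=
        some_mem_U_iff.1 hy
      exact hm₀ q.1 q.2 (le_trans (le_max_left _ _) hm)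
    | some p, some q, hx, hy =>
      have hk : max (gstar p.1) (g₀ p.1) ≤ p.2 := some_mem_U_iff.1 hx
      have hm : max (m₀ q.1) ((Finset.range (N q.1)).sup fun n => MM n q.1) ≤ q.2 :=
        some_mem_U_iff.1 hy
      have hm0 : m₀ q.1 ≤ q.2 := le_trans (le_max_left _ _) hm
      rcases Nat.lt_or_ge p.1 (N q.1) with hlt | hge
      · refine hMM p.1 q.1 p.2 q.2 (le_trans (le_max_right _ _) hk) hm0 ?_
        refine le_trans (le_trans ?_ (le_max_right (m₀ q.1) _)) hm
        exact Finset.le_sup (f := fun n => MM n q.1) (Finset.mem_range.2 hlt)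
      · exact hKK p.1 q.1 p.2 q.2
          (le_trans (hN' q.1 p.1 hge) (le_trans (le_max_left _ _) hk)) hm0

end FanAux

namespace FanAux

lemma not_kR_of_unbounded {ι : Type} (f : ι → ℕ → ℕ)
    (hf : ∀ g : ℕ → ℕ, ∃ α : ι, {n | ¬ f α n ≤ g n}.Infinite) :
    ¬ IsKRSpace (Fan ℕ × Fan ι) := by
  intro hkr
  set d : ι × ℕ → Fan ℕ × Fan ι :=
    fun p => (Fan.pt p.2 (f p.1 p.2), Fan.pt p.1 p.2) with hd
  set D : Set (Fan ℕ × Fan ι) := Set.range d with hD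
  set φ : Fan ℕ × Fan ι → ℝ := D.indicator fun _ => (1 : ℝ) with hφ
  -- D meets every compact set in a finite set
  have hDK : ∀ K : Set (Fan ℕ × Fan ι), IsCompact K → (D ∩ K).Finite := by
    intro K hK
    obtain ⟨A₁, hE₁⟩ := compact_spokes (hK.image continuous_fst)
    obtain ⟨A₂, hE₂⟩ := compact_spokes (hK.image continuous_snd)
    have hG : {p : ι × ℕ | d p ∈ K}.Finite := by
      refine Set.Finite.subset (((A₂.finite_toSet.prod
        (A₁.finite_toSet.union (hE₁.image Prod.fst))).union hE₂)) ?_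
      rintro ⟨α, n⟩ hp
      simp only [Set.mem_setOf_eq] at hp
      have h2 : Fan.pt α n ∈ Prod.snd '' K := ⟨d (α, n), hp, rfl⟩
      by_cases hα : α ∈ A₂
      · left
        refine ⟨hα, ?_⟩
        have h1 : Fan.pt n (f α n) ∈ Prod.fst '' K := ⟨d (α, n), hp, rfl⟩
        by_cases hn : n ∈ A₁
        · exact Or.inl hn
        · exact Or.inr ⟨(n, f α n), ⟨h1, hn⟩, rfl⟩
      · exact Or.inr ⟨h2, hα⟩
    have : D ∩ K ⊆ d '' {p : ι × ℕ | d p ∈ K} := by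
      rintro x ⟨⟨p, rfl⟩, hxK⟩
      exact ⟨p, hxK, rfl⟩
    exact (hG.image d).subset this
  -- φ is continuous on every compact set
  have hcont : ∀ K : Set (Fan ℕ × Fan ι), IsCompact K → ContinuousOn φ K := by
    intro K hK x hxK
    by_cases hxD : x ∈ D
    · have hxopen : IsOpen ({x} : Set (Fan ℕ × Fan ι)) := by
        obtain ⟨p, rfl⟩ := hxD
        rw [← Set.singleton_prod_singleton]
        exact (isOpen_singleton_pt _ _).prod (isOpen_singleton_pt _ _)
      have hev : (fun _ => φ x) =ᶠ[𝓝[K] x] φ := by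
        filter_upwards [nhdsWithin_le_nhds (hxopen.mem_nhds rfl)] with y hy
        rw [Set.mem_singleton_iff.1 hy]
      exact Filter.Tendsto.congr' hev tendsto_const_nhds
    · have hclosed : IsClosed (D ∩ K) := (hDK K hK).isClosed
      have hW : (D ∩ K)ᶜ ∈ 𝓝 x := hclosed.isOpen_compl.mem_nhds
        (by intro hmem; exact hxD hmem.1)
      have hφx : φ x = 0 := Set.indicator_of_notMem hxD _
      have hev : (fun _ => (0 : ℝ)) =ᶠ[𝓝[K] x] φ := by
        filter_upwards [nhdsWithin_le_nhds hW, self_mem_nhdsWithin] with y hy hyK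
        have hyD : y ∉ D := fun hyD => hy ⟨hyD, hyK⟩
        exact (Set.indicator_of_notMem hyD _).symm
      have : Filter.Tendsto φ (𝓝[K] x) (𝓝 0) :=
        Filter.Tendsto.congr' hev tendsto_const_nhds
      rw [← hφx] at this
      exact this
  -- but φ is not continuous
  have hφcont : Continuous φ := hkr φ hcont
  have hapex : φ ((Fan.apex : Fan ℕ), (Fan.apex : Fan ι)) = 0 := by
    refine Set.indicator_of_notMem ?_ _
    rintro ⟨p, hp⟩
    have := congrArg Prod.fst hp
    exact pt_ne_apex _ _ this
  have hopen : IsOpen (φ ⁻¹' Set.Iio (1 : ℝ)) := isOpen_Iio.preimage hφcont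
  have hmem : ((Fan.apex : Fan ℕ), (Fan.apex : Fan ι)) ∈ φ ⁻¹' Set.Iio (1 : ℝ) := by
    simp [hapex]
  obtain ⟨u, v, hu, hv, hau, hav, huv⟩ := isOpen_prod_iff.1 hopen _ _ hmem
  have hufin : ∀ n : ℕ, {k | Fan.pt n k ∉ u}.Finite := (isOpen_iff.1 hu) hau
  choose G hG using fun n => bound_of_finite (hufin n)
  have hvfin : ∀ α : ι, {m : ℕ | Fan.pt α m ∉ v}.Finite := (isOpen_iff.1 hv) hav
  obtain ⟨α, hα⟩ := hf G
  obtain ⟨n, hn1, hn2⟩ := (hα.diff (hvfin α)).nonempty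
  simp only [Set.mem_setOf_eq] at hn1
  have hnv : Fan.pt α n ∈ v := by
    by_contra hcon
    exact hn2 hcon
  have hnu : Fan.pt n (f α n) ∈ u := by
    have := hG n (f α n) (le_of_lt (Nat.lt_of_not_le hn1))
    exact not_not.1 this
  have hdm : d (α, n) ∈ φ ⁻¹' Set.Iio (1 : ℝ) := huv (Set.mk_mem_prod hnu hnv)
  have : φ (d (α, n)) = 1 := Set.indicator_of_mem (show d (α, n) ∈ D from ⟨(α, n), rfl⟩) _
  rw [Set.mem_preimage, this] at hdm
  exact lt_irrefl _ (Set.mem_Iio.1 hdm)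

lemma kR_of_k {X : Type*} [TopologicalSpace X] (hk : IsKSpace X) : IsKRSpace X := by
  intro f hf
  rw [continuous_iff_isClosed]
  intro s hs
  refine hk (f ⁻¹' s) fun K hK => ?_
  have : Continuous (K.restrict f) := continuousOn_iff_continuous_restrict.1 (hf K hK)
  exact hs.preimage this

end FanAux

namespace FanAux

lemma bounded_of_b {ι : Type} (hι : #ι = aleph 1) (hb : aleph 1 < boundingNumber) :
    ∀ gs : ι → ℕ → ℕ, ∃ g : ℕ → ℕ, ∀ α : ι, ∀ᶠ n in Filter.atTop, gs α n ≤ g n := by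
  intro gs
  by_contra hno
  have hmem : #↥(Set.range gs) ∈ {c : Cardinal | ∃ F : Set (ℕ → ℕ), #↥F = c ∧
      ¬ ∃ g : ℕ → ℕ, ∀ f ∈ F, ∀ᶠ n in Filter.atTop, f n ≤ g n} := by
    refine ⟨Set.range gs, rfl, ?_⟩
    rintro ⟨g, hg⟩
    exact hno ⟨g, fun α => hg _ (Set.mem_range_self α)⟩
  have h1 : boundingNumber ≤ #↥(Set.range gs) := csInf_le' hmem
  have h2 : #↥(Set.range gs) ≤ #ι := Cardinal.mk_range_le
  rw [hι] at h2
  exact absurd (h1.trans h2) (not_le.2 hb)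

lemma unbounded_of_not_b {ι : Type} (hι : #ι = aleph 1) (hb : ¬ aleph 1 < boundingNumber) :
    ∃ f : ι → ℕ → ℕ, ∀ g : ℕ → ℕ, ∃ α : ι, {n | ¬ f α n ≤ g n}.Infinite := by
  have hble : boundingNumber ≤ aleph 1 := not_lt.1 hb
  have hSne : {c : Cardinal | ∃ F : Set (ℕ → ℕ), #↥F = c ∧
      ¬ ∃ g : ℕ → ℕ, ∀ f ∈ F, ∀ᶠ n in Filter.atTop, f n ≤ g n}.Nonempty := by
    refine ⟨#↥(Set.univ : Set (ℕ → ℕ)), Set.univ, rfl, ?_⟩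
    rintro ⟨g, hg⟩
    obtain ⟨n, hn⟩ := (hg (fun n => g n + 1) (Set.mem_univ _)).exists
    omega
  have hmem : boundingNumber ∈ {c : Cardinal | ∃ F : Set (ℕ → ℕ), #↥F = c ∧
      ¬ ∃ g : ℕ → ℕ, ∀ f ∈ F, ∀ᶠ n in Filter.atTop, f n ≤ g n} := csInf_mem hSne
  obtain ⟨F, hFc, hFunb⟩ := hmem
  have hFne : Nonempty ↥F := by
    rcases Set.eq_empty_or_nonempty F with rfl | ⟨f₀, hf₀⟩
    · exact absurd ⟨fun _ => 0, by rintro f ⟨⟩⟩ hFunb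
    · exact ⟨⟨f₀, hf₀⟩⟩
  have hle : #↥F ≤ #ι := by rw [hFc, hι]; exact hble
  obtain ⟨e⟩ := (Cardinal.le_def _ _).1 hle
  push_neg at hFunb
  refine ⟨fun x => (Function.invFun e x : ↥F).val, fun g => ?_⟩
  obtain ⟨h, hhF, hne⟩ := hFunb g
  refine ⟨e ⟨h, hhF⟩, ?_⟩
  have hinv : Function.invFun e (e ⟨h, hhF⟩) = ⟨h, hhF⟩ :=
    Function.leftInverse_invFun e.injective _
  have : (fun x => (Function.invFun e x : ↥F).val) (e ⟨h, hhF⟩) = h := by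
    show (Function.invFun e (e ⟨h, hhF⟩) : ↥F).val = h
    rw [hinv]
  rw [show {n | ¬(fun x => (Function.invFun e x : ↥F).val) (e ⟨h, hhF⟩) n ≤ g n}
      = {n | ¬ h n ≤ g n} by rw [this]]
  rw [← Nat.frequently_atTop_iff_infinite]
  exact hne.mono fun n hn => not_le.2 hn

end FanAux

/-- `𝔟 > ω₁` holds iff `S_ω × S_{ω₁}` is a `k_R`-space, iff `S_ω × S_{ω₁}` is a `k`-space. -/
theorem b_gt_aleph_one_iff_fan_prod_kR_iff_k (ι : Type) (hι : #ι = aleph 1) :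
    (aleph 1 < boundingNumber ↔ IsKRSpace (Fan ℕ × Fan ι)) ∧
    (IsKRSpace (Fan ℕ × Fan ι) ↔ IsKSpace (Fan ℕ × Fan ι)) := by
  have hne : Nonempty ι := Cardinal.mk_ne_zero_iff.1 (by rw [hι]; exact (Cardinal.aleph_pos 1).ne')
  have hKofb : aleph 1 < boundingNumber → IsKSpace (Fan ℕ × Fan ι) := fun hb =>
    FanAux.kspace_of_bounded (FanAux.bounded_of_b hι hb)
  have hbofKR : IsKRSpace (Fan ℕ × Fan ι) → aleph 1 < boundingNumber := by
    intro hkr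
    by_contra hb
    obtain ⟨f, hf⟩ := FanAux.unbounded_of_not_b hι hb
    exact FanAux.not_kR_of_unbounded f hf hkr
  exact ⟨⟨fun hb => FanAux.kR_of_k (hKofb hb), hbofKR⟩,
    ⟨fun hkr => hKofb (hbofKR hkr), fun hk => FanAux.kR_of_k hk⟩⟩
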